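/- There exists a finite constant C (depending only on α) such that for all ε ∈ (0,1): ∫₀^ε ∫₁^∞ p_s(y)² dy ds ≤ C ε³; in particular this quantity is at most C ε^{2(α−1)/α} uniformly for ε ∈ (0,1). -/

import Mathlib

open MeasureTheory Real

/-- The symmetric α-stable heat kernel on ℝ:
`p_t(x) = (2π)⁻¹ ∫ cos(ξx) e^{−t|ξ|^α/2} dξ`. -/
noncomputable def stableKernel (α t x : ℝ) : ℝ :=
  (2 * Real.pi)⁻¹ * ∫ ξ : ℝ, Real.cos (ξ * x) * Real.exp (-(t * |ξ| ^ α) / 2)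

open Set Filter

/-- auxiliary: power times stretched exponential -/
noncomputable def pe (α c b x : ℝ) : ℝ := x ^ b * Real.exp (-(c * x ^ α))

lemma contAt_pe {α c b : ℝ} {x : ℝ} (h : x ≠ 0 ∨ (0 ≤ b ∧ 0 ≤ α)) :
    ContinuousAt (fun t => pe α c b t) x := by
  have hb : x ≠ 0 ∨ 0 ≤ b := h.imp id And.left
  have ha : x ≠ 0 ∨ 0 ≤ α := h.imp id And.right
  exact (Real.continuousAt_rpow_const x b hb).mul
    ((((Real.continuousAt_rpow_const x α ha).const_mul c).neg).rexp)

lemma hasDerivAt_pe (α c b : ℝ) {x : ℝ} (hx : 0 < x) :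
    HasDerivAt (fun t => pe α c b t)
      (b * pe α c (b - 1) x - c * α * pe α c (b + α - 1) x) x := by
  have h1 : HasDerivAt (fun t : ℝ => t ^ b) (b * x ^ (b - 1)) x :=
    Real.hasDerivAt_rpow_const (Or.inl hx.ne')
  have h2 : HasDerivAt (fun t : ℝ => Real.exp (-(c * t ^ α)))
      (Real.exp (-(c * x ^ α)) * (-(c * (α * x ^ (α - 1))))) x :=
    ((((Real.hasDerivAt_rpow_const (p := α) (Or.inl hx.ne'))).const_mul c).neg).exp
  have h := h1.mul h2
  refine h.congr_deriv ?_
  simp only [pe]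
  rw [show b + α - 1 = (b) + (α - 1) by ring, Real.rpow_add hx]
  ring

lemma int_pe {α b c : ℝ} (hα : 1 ≤ α) (hb : -1 < b) (hc : 0 < c) :
    IntegrableOn (fun x => pe α c b x) (Ioi 0) := by
  have := integrableOn_rpow_mul_exp_neg_mul_rpow (p := α) hb (by linarith) hc
  simpa [pe, neg_mul] using this

lemma tendsto_pe {α b c : ℝ} (hα : 1 < α) (hc : 0 < c) :
    Tendsto (fun x => pe α c b x) atTop (nhds 0) := by
  have h := rpow_mul_exp_neg_mul_rpow_isLittleO_exp_neg b hα hc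
  have h2 : Tendsto (fun x : ℝ => Real.exp (-(1/2) * x)) atTop (nhds 0) := by
    have hl : Tendsto (fun x : ℝ => (1/2) * x) atTop atTop :=
      Tendsto.const_mul_atTop one_half_pos tendsto_id
    have hcomp := (Real.tendsto_exp_neg_atTop_nhds_zero).comp hl
    simpa [Function.comp_def, neg_mul] using hcomp
  have := h.isBigO.trans_tendsto h2
  simpa [pe, neg_mul] using this

lemma pe_nonneg {α c b x : ℝ} (hx : 0 ≤ x) : 0 ≤ pe α c b x :=
  mul_nonneg (Real.rpow_nonneg hx b) (Real.exp_pos _).le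

lemma int_trig_pe {α b c : ℝ} (hα : 1 ≤ α) (hb : -1 < b) (hc : 0 < c)
    {u : ℝ → ℝ} (hu : Continuous u) (hub : ∀ x, |u x| ≤ 1) :
    IntegrableOn (fun x => u x * pe α c b x) (Ioi 0) := by
  refine (int_pe hα hb hc).mono' ?_ ?_
  · refine hu.aestronglyMeasurable.restrict.mul ?_
    refine ContinuousOn.aestronglyMeasurable ?_ measurableSet_Ioi
    exact fun x hx => (contAt_pe (Or.inl (ne_of_gt hx))).continuousWithinAt
  · filter_upwards [ae_restrict_mem measurableSet_Ioi] with x hx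
    have h0 : (0:ℝ) < x := hx
    rw [Real.norm_eq_abs, abs_mul, abs_of_nonneg (pe_nonneg h0.le)]
    calc |u x| * pe α c b x ≤ 1 * pe α c b x :=
          mul_le_mul_of_nonneg_right (hub x) (pe_nonneg h0.le)
      _ = pe α c b x := one_mul _

lemma int_pe_eq {α b c : ℝ} (hα : 0 < α) (hb : -1 < b) (hc : 0 < c) :
    ∫ x in Ioi (0:ℝ), pe α c b x
      = c ^ (-(b + 1) / α) * (1 / α) * Real.Gamma ((b + 1) / α) := by
  have := integral_rpow_mul_exp_neg_mul_rpow hα hb hc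
  rw [← this]
  refine setIntegral_congr_fun measurableSet_Ioi (fun x _ => ?_)
  simp [pe, neg_mul]

lemma abs_int_trig_pe {α b c : ℝ} (hα : 1 ≤ α) (hb : -1 < b) (hc : 0 < c)
    {u : ℝ → ℝ} (hub : ∀ x, |u x| ≤ 1) :
    |∫ x in Ioi (0:ℝ), u x * pe α c b x|
      ≤ c ^ (-(b + 1) / α) * (1 / α) * Real.Gamma ((b + 1) / α) := by
  rw [← int_pe_eq (lt_of_lt_of_le one_pos hα) hb hc]
  calc |∫ x in Ioi (0:ℝ), u x * pe α c b x| ≤ ∫ x in Ioi (0:ℝ), |u x| * |pe α c b x| := by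
        simpa [Real.norm_eq_abs] using
          norm_integral_le_integral_norm (μ := volume.restrict (Ioi (0:ℝ)))
            (fun x => u x * pe α c b x)
    _ ≤ ∫ x in Ioi (0:ℝ), pe α c b x := by
        refine integral_mono_of_nonneg
          (ae_of_all _ fun x => mul_nonneg (abs_nonneg _) (abs_nonneg _))
          (int_pe hα hb hc) ?_
        filter_upwards [ae_restrict_mem measurableSet_Ioi] with x hx
        have h0 : (0:ℝ) < x := hx
        rw [abs_of_nonneg (pe_nonneg h0.le)]
        calc |u x| * pe α c b x ≤ 1 * pe α c b x :=
              mul_le_mul_of_nonneg_right (hub x) (pe_nonneg h0.le)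
          _ = pe α c b x := one_mul _

lemma abs_sin_le_one' (x : ℝ) : |Real.sin x| ≤ 1 :=
  abs_le.2 ⟨Real.neg_one_le_sin x, Real.sin_le_one x⟩

lemma abs_cos_le_one' (x : ℝ) : |Real.cos x| ≤ 1 :=
  abs_le.2 ⟨Real.neg_one_le_cos x, Real.cos_le_one x⟩

lemma ibp_cos {a y : ℝ} (hy : 0 < y) {w w' : ℝ → ℝ}
    (hw : ∀ x ∈ Ioi a, HasDerivAt w (w' x) x)
    (hwc : ContinuousWithinAt w (Ici a) a)
    (hw0 : Tendsto w atTop (nhds 0))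
    (h1 : IntegrableOn (fun x => Real.cos (x * y) * w x) (Ioi a))
    (h2 : IntegrableOn (fun x => Real.sin (x * y) * w' x) (Ioi a)) :
    ∫ x in Ioi a, Real.cos (x * y) * w x
      = -(Real.sin (a * y) / y) * w a
        - (1 / y) * ∫ x in Ioi a, Real.sin (x * y) * w' x := by
  have hF : ∀ x ∈ Ioi a, HasDerivAt (fun x => Real.sin (x * y) / y * w x)
      (Real.cos (x * y) * w x + (1 / y) * (Real.sin (x * y) * w' x)) x := by
    intro x hx
    have hs : HasDerivAt (fun x : ℝ => Real.sin (x * y) / y) (Real.cos (x * y) * y / y) x :=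
      ((hasDerivAt_mul_const y).sin).div_const y
    have h := hs.mul (hw x hx)
    refine h.congr_deriv ?_
    field_simp
  have hcont : ContinuousWithinAt (fun x => Real.sin (x * y) / y * w x) (Ici a) a :=
    ((Real.continuous_sin.comp (continuous_id.mul continuous_const)).div_const
      y).continuousWithinAt.mul hwc
  have htend : Tendsto (fun x => Real.sin (x * y) / y * w x) atTop (nhds 0) := by
    apply squeeze_zero_norm (a := fun x => (1 / y) * ‖w x‖)
    · intro x
      rw [norm_mul]
      apply mul_le_mul_of_nonneg_right _ (norm_nonneg _)
      rw [norm_div, Real.norm_eq_abs, Real.norm_eq_abs, abs_of_pos hy]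
      exact div_le_div_of_nonneg_right (abs_sin_le_one' _) hy.le
    · have h := hw0.norm.const_mul (1 / y)
      simpa using h
  have hFint : IntegrableOn
      (fun x => Real.cos (x * y) * w x + (1 / y) * (Real.sin (x * y) * w' x)) (Ioi a) :=
    h1.add (h2.const_mul _)
  have key := integral_Ioi_of_hasDerivAt_of_tendsto hcont hF hFint htend
  rw [integral_add h1 (h2.const_mul _), integral_const_mul] at key
  simp only [zero_sub] at key
  linarith [key]

lemma ibp_sin {a y : ℝ} (hy : 0 < y) {w w' : ℝ → ℝ}
    (hw : ∀ x ∈ Ioi a, HasDerivAt w (w' x) x)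
    (hwc : ContinuousWithinAt w (Ici a) a)
    (hw0 : Tendsto w atTop (nhds 0))
    (h1 : IntegrableOn (fun x => Real.sin (x * y) * w x) (Ioi a))
    (h2 : IntegrableOn (fun x => Real.cos (x * y) * w' x) (Ioi a)) :
    ∫ x in Ioi a, Real.sin (x * y) * w x
      = (Real.cos (a * y) / y) * w a
        + (1 / y) * ∫ x in Ioi a, Real.cos (x * y) * w' x := by
  have hF : ∀ x ∈ Ioi a, HasDerivAt (fun x => -(Real.cos (x * y) / y) * w x)
      (Real.sin (x * y) * w x - (1 / y) * (Real.cos (x * y) * w' x)) x := by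
    intro x hx
    have hs : HasDerivAt (fun x : ℝ => -(Real.cos (x * y) / y))
        (-(-Real.sin (x * y) * y / y)) x :=
      (((hasDerivAt_mul_const y).cos).div_const y).neg
    have h := hs.mul (hw x hx)
    refine h.congr_deriv ?_
    field_simp
    ring
  have hcont : ContinuousWithinAt (fun x => -(Real.cos (x * y) / y) * w x) (Ici a) a :=
    (((Real.continuous_cos.comp (continuous_id.mul continuous_const)).div_const
      y).neg).continuousWithinAt.mul hwc
  have htend : Tendsto (fun x => -(Real.cos (x * y) / y) * w x) atTop (nhds 0) := by
    apply squeeze_zero_norm (a := fun x => (1 / y) * ‖w x‖)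
    · intro x
      rw [norm_mul]
      apply mul_le_mul_of_nonneg_right _ (norm_nonneg _)
      rw [norm_neg, norm_div, Real.norm_eq_abs, Real.norm_eq_abs, abs_of_pos hy]
      exact div_le_div_of_nonneg_right (abs_cos_le_one' _) hy.le
    · have h := hw0.norm.const_mul (1 / y)
      simpa using h
  have hFint : IntegrableOn
      (fun x => Real.sin (x * y) * w x - (1 / y) * (Real.cos (x * y) * w' x)) (Ioi a) :=
    h1.sub (h2.const_mul _)
  have key := integral_Ioi_of_hasDerivAt_of_tendsto hcont hF hFint htend
  rw [integral_sub h1 (h2.const_mul _), integral_const_mul] at key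
  simp only [zero_sub, neg_neg] at key
  linarith [key]

lemma cont_cos_mul (y : ℝ) : Continuous fun x : ℝ => Real.cos (x * y) :=
  Real.continuous_cos.comp (continuous_id.mul continuous_const)

lemma cont_sin_mul (y : ℝ) : Continuous fun x : ℝ => Real.sin (x * y) :=
  Real.continuous_sin.comp (continuous_id.mul continuous_const)

lemma partB {α c y : ℝ} (h1 : 1 < α) (hc : 0 < c) (hy : 1 ≤ y) :
    |∫ x in Ioi (0:ℝ), Real.cos (x * y) * pe α c (2*α-2) x|
      ≤ ((2*α-2) * (1/α) * Real.Gamma ((2*α-2)/α) + Real.Gamma ((3*α-2)/α))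
          * c ^ (-(2*α-2)/α) := by
  have hα1 : (1:ℝ) ≤ α := h1.le
  have hy0 : (0:ℝ) < y := lt_of_lt_of_le one_pos hy
  have hα0 : (0:ℝ) < α := by linarith
  set w' : ℝ → ℝ :=
    fun x => (2*α-2) * pe α c (2*α-3) x - (c*α) * pe α c (3*α-3) x with hw'def
  have hw : ∀ x ∈ Ioi (0:ℝ), HasDerivAt (fun t => pe α c (2*α-2) t) (w' x) x := by
    intro x hx
    have h := hasDerivAt_pe α c (2*α-2) hx
    simpa [hw'def, show 2*α-2-1 = 2*α-3 by ring, show 2*α-2+α-1 = 3*α-3 by ring] using h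
  have hwc : ContinuousWithinAt (fun t => pe α c (2*α-2) t) (Ici (0:ℝ)) 0 :=
    (contAt_pe (Or.inr ⟨by linarith, by linarith⟩)).continuousWithinAt
  have hw0 : Tendsto (fun t => pe α c (2*α-2) t) atTop (nhds 0) := tendsto_pe h1 hc
  have hint1 : IntegrableOn (fun x => Real.cos (x * y) * pe α c (2*α-2) x) (Ioi 0) :=
    int_trig_pe hα1 (by linarith) hc (cont_cos_mul y) (fun x => abs_cos_le_one' _)
  have hia : IntegrableOn (fun x => Real.sin (x * y) * pe α c (2*α-3) x) (Ioi 0) :=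
    int_trig_pe hα1 (by linarith) hc (cont_sin_mul y) (fun x => abs_sin_le_one' _)
  have hib : IntegrableOn (fun x => Real.sin (x * y) * pe α c (3*α-3) x) (Ioi 0) :=
    int_trig_pe hα1 (by linarith) hc (cont_sin_mul y) (fun x => abs_sin_le_one' _)
  have hfeq : (fun x => Real.sin (x * y) * w' x)
      = fun x => (2*α-2) * (Real.sin (x * y) * pe α c (2*α-3) x)
          - (c*α) * (Real.sin (x * y) * pe α c (3*α-3) x) := by
    funext x; simp only [hw'def]; ring
  have hint2 : IntegrableOn (fun x => Real.sin (x * y) * w' x) (Ioi 0) := by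
    rw [hfeq]; exact (hia.const_mul _).sub (hib.const_mul _)
  have key := ibp_cos hy0 hw hwc hw0 hint1 hint2
  have hzero : pe α c (2*α-2) 0 = 0 := by
    simp [pe, Real.zero_rpow (show 2*α-2 ≠ 0 by linarith)]
  rw [hzero] at key
  have hsplit : (∫ x in Ioi (0:ℝ), Real.sin (x * y) * w' x)
      = (2*α-2) * (∫ x in Ioi (0:ℝ), Real.sin (x * y) * pe α c (2*α-3) x)
        - (c*α) * (∫ x in Ioi (0:ℝ), Real.sin (x * y) * pe α c (3*α-3) x) := by
    rw [hfeq, integral_sub (hia.const_mul _) (hib.const_mul _),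
      integral_const_mul, integral_const_mul]
  have t1 : |∫ x in Ioi (0:ℝ), Real.sin (x * y) * pe α c (2*α-3) x|
      ≤ c ^ (-(2*α-2)/α) * (1/α) * Real.Gamma ((2*α-2)/α) := by
    have h := abs_int_trig_pe (b := 2*α-3) (u := fun x => Real.sin (x*y)) hα1 (by linarith) hc (fun x => abs_sin_le_one' _)
    simpa [show 2*α-3+1 = 2*α-2 by ring] using h
  have t2 : |∫ x in Ioi (0:ℝ), Real.sin (x * y) * pe α c (3*α-3) x|
      ≤ c ^ (-(3*α-2)/α) * (1/α) * Real.Gamma ((3*α-2)/α) := by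
    have h := abs_int_trig_pe (b := 3*α-3) (u := fun x => Real.sin (x*y)) hα1 (by linarith) hc (fun x => abs_sin_le_one' _)
    simpa [show 3*α-3+1 = 3*α-2 by ring] using h
  have hpow : c * c ^ (-(3*α-2)/α) = c ^ (-(2*α-2)/α) := by
    nth_rewrite 1 [← Real.rpow_one c]
    rw [← Real.rpow_add hc]
    congr 1
    field_simp
    ring
  have hαne : α ≠ 0 := ne_of_gt hα0
  have habs : |∫ x in Ioi (0:ℝ), Real.sin (x * y) * w' x|
      ≤ ((2*α-2) * (1/α) * Real.Gamma ((2*α-2)/α) + Real.Gamma ((3*α-2)/α))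
          * c ^ (-(2*α-2)/α) := by
    rw [hsplit]
    have tri : |(2*α-2) * (∫ x in Ioi (0:ℝ), Real.sin (x * y) * pe α c (2*α-3) x)
          - (c*α) * (∫ x in Ioi (0:ℝ), Real.sin (x * y) * pe α c (3*α-3) x)|
        ≤ (2*α-2) * |∫ x in Ioi (0:ℝ), Real.sin (x * y) * pe α c (2*α-3) x|
          + (c*α) * |∫ x in Ioi (0:ℝ), Real.sin (x * y) * pe α c (3*α-3) x| := by
      calc _ ≤ |(2*α-2) * (∫ x in Ioi (0:ℝ), Real.sin (x * y) * pe α c (2*α-3) x)|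
            + |(c*α) * (∫ x in Ioi (0:ℝ), Real.sin (x * y) * pe α c (3*α-3) x)| :=
          abs_sub _ _
        _ = _ := by
          rw [abs_mul, abs_mul, abs_of_nonneg (show (0:ℝ) ≤ 2*α-2 by linarith),
            abs_of_nonneg (show (0:ℝ) ≤ c*α by positivity)]
    refine tri.trans ?_
    have step := add_le_add
      (mul_le_mul_of_nonneg_left t1 (show (0:ℝ) ≤ 2*α-2 by linarith))
      (mul_le_mul_of_nonneg_left t2 (show (0:ℝ) ≤ c*α by positivity))
    refine step.trans (le_of_eq ?_)
    have e2 : (c*α) * (c ^ (-(3*α-2)/α) * (1/α) * Real.Gamma ((3*α-2)/α))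
        = (c * c ^ (-(3*α-2)/α)) * Real.Gamma ((3*α-2)/α) * (α / α) := by ring
    rw [e2, div_self hαne, mul_one, hpow]
    ring
  rw [key]
  simp only [zero_mul, mul_zero, neg_zero, zero_sub, abs_neg, abs_mul, abs_div]
  rw [abs_of_pos hy0, abs_of_nonneg (by norm_num : (0:ℝ) ≤ 1)]
  calc 1 / y * |∫ x in Ioi (0:ℝ), Real.sin (x * y) * w' x|
      ≤ 1 * |∫ x in Ioi (0:ℝ), Real.sin (x * y) * w' x| := by
        apply mul_le_mul_of_nonneg_right _ (abs_nonneg _)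
        rw [div_le_one hy0]; exact hy
    _ ≤ _ := by rw [one_mul]; exact habs

lemma partA {α c y : ℝ} (h1 : 1 < α) (h2 : α ≤ 2) (hc : 0 < c) (hc1 : c ≤ 1)
    (hy : 1 ≤ y) :
    |∫ x in Ioi (0:ℝ), Real.cos (x * y) * pe α c (α-2) x|
      ≤ 1/(α-1) + 2 + Real.Gamma ((2*α-2)/α) := by
  have hα1 : (1:ℝ) ≤ α := h1.le
  have hy0 : (0:ℝ) < y := lt_of_lt_of_le one_pos hy
  have hα0 : (0:ℝ) < α := by linarith
  have hf : IntegrableOn (fun x => Real.cos (x * y) * pe α c (α-2) x) (Ioi 0) :=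
    int_trig_pe hα1 (by linarith) hc (cont_cos_mul y) (fun x => abs_cos_le_one' _)
  have hG1 : 0 ≤ Real.Gamma ((2*α-2)/α) :=
    (Real.Gamma_pos_of_pos (div_pos (by linarith) hα0)).le
  -- split the integral
  have hu : Ioc (0:ℝ) 1 ∪ Ioi 1 = Ioi 0 := Ioc_union_Ioi_eq_Ioi zero_le_one
  have hsub1 : Ioc (0:ℝ) 1 ⊆ Ioi 0 := fun x hx => hx.1
  have hsub2 : Ioi (1:ℝ) ⊆ Ioi 0 := fun x hx => mem_Ioi.2 (lt_trans one_pos (mem_Ioi.1 hx))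
  have hsplit : (∫ x in Ioi (0:ℝ), Real.cos (x * y) * pe α c (α-2) x)
      = (∫ x in Ioc (0:ℝ) 1, Real.cos (x * y) * pe α c (α-2) x)
        + ∫ x in Ioi (1:ℝ), Real.cos (x * y) * pe α c (α-2) x := by
    rw [← hu]
    exact setIntegral_union (Ioc_disjoint_Ioi le_rfl) measurableSet_Ioi
      (hf.mono_set (hu ▸ hsub1)) (hf.mono_set (hu ▸ hsub2))
  -- part on (0,1]
  have hrint : IntegrableOn (fun x : ℝ => x ^ (α-2)) (Ioc (0:ℝ) 1) := by
    have h := intervalIntegral.intervalIntegrable_rpow' (a := 0) (b := 1)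
      (show (-1:ℝ) < α-2 by linarith)
    rwa [intervalIntegrable_iff_integrableOn_Ioc_of_le zero_le_one] at h
  have hval : (∫ x in Ioc (0:ℝ) 1, x ^ (α-2)) = 1/(α-1) := by
    rw [← intervalIntegral.integral_of_le zero_le_one,
      integral_rpow (Or.inl (show (-1:ℝ) < α-2 by linarith))]
    rw [Real.one_rpow, Real.zero_rpow (show α-2+1 ≠ 0 by intro h; linarith [h]),
      show α-2+1 = α-1 by ring]
    norm_num
  have hpart1 : |∫ x in Ioc (0:ℝ) 1, Real.cos (x * y) * pe α c (α-2) x| ≤ 1/(α-1) := by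
    rw [← hval]
    calc |∫ x in Ioc (0:ℝ) 1, Real.cos (x * y) * pe α c (α-2) x|
        ≤ ∫ x in Ioc (0:ℝ) 1, |Real.cos (x * y)| * |pe α c (α-2) x| := by
          simpa [Real.norm_eq_abs] using
            norm_integral_le_integral_norm (μ := volume.restrict (Ioc (0:ℝ) 1))
              (fun x => Real.cos (x * y) * pe α c (α-2) x)
      _ ≤ ∫ x in Ioc (0:ℝ) 1, x ^ (α-2) := by
          refine integral_mono_of_nonneg
            (ae_of_all _ fun x => mul_nonneg (abs_nonneg _) (abs_nonneg _)) hrint ?_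
          filter_upwards [ae_restrict_mem measurableSet_Ioc] with x hx
          have h0 : (0:ℝ) < x := hx.1
          rw [abs_of_nonneg (pe_nonneg h0.le)]
          calc |Real.cos (x * y)| * pe α c (α-2) x ≤ 1 * pe α c (α-2) x :=
                mul_le_mul_of_nonneg_right (abs_cos_le_one' _) (pe_nonneg h0.le)
            _ = x ^ (α-2) * Real.exp (-(c * x ^ α)) := by rw [one_mul]; rfl
            _ ≤ x ^ (α-2) * 1 := by
                apply mul_le_mul_of_nonneg_left _ (Real.rpow_nonneg h0.le _)
                exact Real.exp_le_one_iff.2 (by positivity |> neg_nonpos_of_nonneg)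
            _ = x ^ (α-2) := mul_one _
  -- part on (1,∞) via integration by parts
  set w' : ℝ → ℝ :=
    fun x => (α-2) * pe α c (α-3) x - (c*α) * pe α c (2*α-3) x with hw'def
  have hw : ∀ x ∈ Ioi (1:ℝ), HasDerivAt (fun t => pe α c (α-2) t) (w' x) x := by
    intro x hx
    have hx0 : (0:ℝ) < x := lt_trans one_pos hx
    have h := hasDerivAt_pe α c (α-2) hx0
    simpa [hw'def, show α-2-1 = α-3 by ring, show α-2+α-1 = 2*α-3 by ring] using h
  have hwc : ContinuousWithinAt (fun t => pe α c (α-2) t) (Ici (1:ℝ)) 1 :=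
    (contAt_pe (Or.inl one_ne_zero)).continuousWithinAt
  have hw0 : Tendsto (fun t => pe α c (α-2) t) atTop (nhds 0) := tendsto_pe h1 hc
  have hint1 : IntegrableOn (fun x => Real.cos (x * y) * pe α c (α-2) x) (Ioi 1) :=
    hf.mono_set hsub2
  have hib0 : IntegrableOn (fun x => Real.sin (x * y) * pe α c (2*α-3) x) (Ioi 0) :=
    int_trig_pe hα1 (by linarith) hc (cont_sin_mul y) (fun x => abs_sin_le_one' _)
  have hib : IntegrableOn (fun x => Real.sin (x * y) * pe α c (2*α-3) x) (Ioi 1) :=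
    hib0.mono_set hsub2
  have hia : IntegrableOn (fun x => Real.sin (x * y) * pe α c (α-3) x) (Ioi 1) := by
    refine ((int_pe hα1 (show (-1:ℝ) < 2*α-3 by linarith) hc).mono_set hsub2).mono' ?_ ?_
    · refine ((cont_sin_mul y).aestronglyMeasurable.restrict).mul ?_
      refine ContinuousOn.aestronglyMeasurable ?_ measurableSet_Ioi
      exact fun x hx =>
        (contAt_pe (Or.inl (ne_of_gt (lt_trans one_pos hx)))).continuousWithinAt
    · filter_upwards [ae_restrict_mem measurableSet_Ioi] with x hx
      have hx1 : (1:ℝ) ≤ x := le_of_lt hx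
      have hx0 : (0:ℝ) < x := lt_of_lt_of_le one_pos hx1
      rw [Real.norm_eq_abs, abs_mul, abs_of_nonneg (pe_nonneg hx0.le)]
      calc |Real.sin (x * y)| * pe α c (α-3) x ≤ 1 * pe α c (α-3) x :=
            mul_le_mul_of_nonneg_right (abs_sin_le_one' _) (pe_nonneg hx0.le)
        _ = x ^ (α-3) * Real.exp (-(c * x ^ α)) := by rw [one_mul]; rfl
        _ ≤ x ^ (2*α-3) * Real.exp (-(c * x ^ α)) := by
            apply mul_le_mul_of_nonneg_right _ (Real.exp_pos _).le
            exact Real.rpow_le_rpow_of_exponent_le hx1 (by linarith)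
        _ = pe α c (2*α-3) x := rfl
  have hfeq : (fun x => Real.sin (x * y) * w' x)
      = fun x => (α-2) * (Real.sin (x * y) * pe α c (α-3) x)
          - (c*α) * (Real.sin (x * y) * pe α c (2*α-3) x) := by
    funext x; simp only [hw'def]; ring
  have hint2 : IntegrableOn (fun x => Real.sin (x * y) * w' x) (Ioi 1) := by
    rw [hfeq]; exact (hia.const_mul _).sub (hib.const_mul _)
  have key := ibp_cos hy0 hw hwc hw0 hint1 hint2
  -- bound the boundary term
  have hbd : |(-(Real.sin (1 * y) / y)) * pe α c (α-2) 1| ≤ 1 := by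
    rw [abs_mul, abs_neg, abs_div, abs_of_pos hy0]
    have e1 : pe α c (α-2) 1 = Real.exp (-(c * 1 ^ α)) := by
      simp [pe, Real.one_rpow]
    calc |Real.sin (1 * y)| / y * |pe α c (α-2) 1| ≤ (1/y) * 1 := by
          apply mul_le_mul
          · exact div_le_div_of_nonneg_right (abs_sin_le_one' _) hy0.le
          · rw [e1, abs_of_nonneg (Real.exp_pos _).le]
            exact Real.exp_le_one_iff.2 (by positivity |> neg_nonpos_of_nonneg)
          · exact abs_nonneg _
          · positivity
      _ ≤ 1 * 1 := by
          apply mul_le_mul_of_nonneg_right _ zero_le_one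
          rw [div_le_one hy0]; exact hy
      _ = 1 := one_mul _
  -- bound the integral term
  have hT1 : |α-2| * |∫ x in Ioi (1:ℝ), Real.sin (x * y) * pe α c (α-3) x| ≤ 1 := by
    rcases eq_or_lt_of_le h2 with he | hlt
    · simp [he]
    · have hr : IntegrableOn (fun x : ℝ => x ^ (α-3)) (Ioi 1) :=
        integrableOn_Ioi_rpow_of_lt (by linarith) one_pos
      have hrv : (∫ x in Ioi (1:ℝ), x ^ (α-3)) = 1/(2-α) := by
        rw [integral_Ioi_rpow_of_lt (by linarith) one_pos]
        rw [Real.one_rpow, show α-3+1 = α-2 by ring]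
        rw [show -(1:ℝ)/(α-2) = 1/(2-α) from by
          rw [div_eq_div_iff (sub_ne_zero.mpr (ne_of_lt hlt)) (sub_ne_zero.mpr (ne_of_gt hlt))]
          ring]
      have habs : |∫ x in Ioi (1:ℝ), Real.sin (x * y) * pe α c (α-3) x| ≤ 1/(2-α) := by
        rw [← hrv]
        calc |∫ x in Ioi (1:ℝ), Real.sin (x * y) * pe α c (α-3) x|
            ≤ ∫ x in Ioi (1:ℝ), |Real.sin (x * y)| * |pe α c (α-3) x| := by
              simpa [Real.norm_eq_abs] using
                norm_integral_le_integral_norm (μ := volume.restrict (Ioi (1:ℝ)))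
                  (fun x => Real.sin (x * y) * pe α c (α-3) x)
          _ ≤ ∫ x in Ioi (1:ℝ), x ^ (α-3) := by
              refine integral_mono_of_nonneg
                (ae_of_all _ fun x => mul_nonneg (abs_nonneg _) (abs_nonneg _)) hr ?_
              filter_upwards [ae_restrict_mem measurableSet_Ioi] with x hx
              have hx0 : (0:ℝ) < x := lt_trans one_pos hx
              rw [abs_of_nonneg (pe_nonneg hx0.le)]
              calc |Real.sin (x * y)| * pe α c (α-3) x ≤ 1 * pe α c (α-3) x :=
                    mul_le_mul_of_nonneg_right (abs_sin_le_one' _) (pe_nonneg hx0.le)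
                _ = x ^ (α-3) * Real.exp (-(c * x ^ α)) := by rw [one_mul]; rfl
                _ ≤ x ^ (α-3) * 1 := by
                    apply mul_le_mul_of_nonneg_left _ (Real.rpow_nonneg hx0.le _)
                    exact Real.exp_le_one_iff.2 (by positivity |> neg_nonpos_of_nonneg)
                _ = x ^ (α-3) := mul_one _
      calc |α-2| * |∫ x in Ioi (1:ℝ), Real.sin (x * y) * pe α c (α-3) x|
          ≤ (2-α) * (1/(2-α)) := by
            rw [abs_of_nonpos (by linarith : α-2 ≤ 0), show -(α-2) = 2-α by ring]
            exact mul_le_mul_of_nonneg_left habs (by linarith)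
        _ = 1 := by
            rw [mul_one_div, div_self (show (2:ℝ)-α ≠ 0 by linarith)]
  have hT2 : (c*α) * |∫ x in Ioi (1:ℝ), Real.sin (x * y) * pe α c (2*α-3) x|
      ≤ Real.Gamma ((2*α-2)/α) := by
    have hmono : (∫ x in Ioi (1:ℝ), pe α c (2*α-3) x)
        ≤ ∫ x in Ioi (0:ℝ), pe α c (2*α-3) x := by
      apply setIntegral_mono_set (int_pe hα1 (by linarith) hc)
      · filter_upwards [ae_restrict_mem measurableSet_Ioi] with x hx
        exact pe_nonneg (le_of_lt hx)
      · exact HasSubset.Subset.eventuallyLE hsub2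
    have habs : |∫ x in Ioi (1:ℝ), Real.sin (x * y) * pe α c (2*α-3) x|
        ≤ ∫ x in Ioi (0:ℝ), pe α c (2*α-3) x := by
      refine le_trans ?_ hmono
      calc |∫ x in Ioi (1:ℝ), Real.sin (x * y) * pe α c (2*α-3) x|
          ≤ ∫ x in Ioi (1:ℝ), |Real.sin (x * y)| * |pe α c (2*α-3) x| := by
            simpa [Real.norm_eq_abs] using
              norm_integral_le_integral_norm (μ := volume.restrict (Ioi (1:ℝ)))
                (fun x => Real.sin (x * y) * pe α c (2*α-3) x)
        _ ≤ ∫ x in Ioi (1:ℝ), pe α c (2*α-3) x := by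
            refine integral_mono_of_nonneg
              (ae_of_all _ fun x => mul_nonneg (abs_nonneg _) (abs_nonneg _))
              ((int_pe hα1 (by linarith) hc).mono_set hsub2) ?_
            filter_upwards [ae_restrict_mem measurableSet_Ioi] with x hx
            have hx0 : (0:ℝ) < x := lt_trans one_pos hx
            rw [abs_of_nonneg (pe_nonneg hx0.le)]
            calc |Real.sin (x * y)| * pe α c (2*α-3) x ≤ 1 * pe α c (2*α-3) x :=
                  mul_le_mul_of_nonneg_right (abs_sin_le_one' _) (pe_nonneg hx0.le)
              _ = pe α c (2*α-3) x := one_mul _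
    have hval2 : (∫ x in Ioi (0:ℝ), pe α c (2*α-3) x)
        = c ^ (-(2*α-2)/α) * (1/α) * Real.Gamma ((2*α-2)/α) := by
      have h := int_pe_eq (b := 2*α-3) hα0 (by linarith) hc
      rwa [show 2*α-3+1 = 2*α-2 by ring] at h
    calc (c*α) * |∫ x in Ioi (1:ℝ), Real.sin (x * y) * pe α c (2*α-3) x|
        ≤ (c*α) * (c ^ (-(2*α-2)/α) * (1/α) * Real.Gamma ((2*α-2)/α)) := by
          apply mul_le_mul_of_nonneg_left _ (by positivity)
          rw [← hval2]; exact habs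
      _ = c ^ (1 + -(2*α-2)/α) * Real.Gamma ((2*α-2)/α) * (α * (1/α)) := by
          rw [Real.rpow_add hc, Real.rpow_one]; ring
      _ = c ^ ((2-α)/α) * Real.Gamma ((2*α-2)/α) := by
          rw [show 1 + -(2*α-2)/α = (2-α)/α by field_simp; ring,
            mul_one_div, div_self (ne_of_gt hα0), mul_one]
      _ ≤ 1 * Real.Gamma ((2*α-2)/α) := by
          apply mul_le_mul_of_nonneg_right _ hG1
          exact Real.rpow_le_one hc.le hc1 (div_nonneg (by linarith) hα0.le)
      _ = Real.Gamma ((2*α-2)/α) := one_mul _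
  -- assemble part 2
  have hintsplit : (∫ x in Ioi (1:ℝ), Real.sin (x * y) * w' x)
      = (α-2) * (∫ x in Ioi (1:ℝ), Real.sin (x * y) * pe α c (α-3) x)
        - (c*α) * (∫ x in Ioi (1:ℝ), Real.sin (x * y) * pe α c (2*α-3) x) := by
    rw [hfeq, integral_sub (hia.const_mul _) (hib.const_mul _),
      integral_const_mul, integral_const_mul]
  have hpart2 : |∫ x in Ioi (1:ℝ), Real.cos (x * y) * pe α c (α-2) x|
      ≤ 2 + Real.Gamma ((2*α-2)/α) := by
    rw [key]
    have htri : |(-(Real.sin (1 * y) / y)) * pe α c (α-2) 1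
          - (1/y) * ∫ x in Ioi (1:ℝ), Real.sin (x * y) * w' x|
        ≤ |(-(Real.sin (1 * y) / y)) * pe α c (α-2) 1|
          + (1/y) * |∫ x in Ioi (1:ℝ), Real.sin (x * y) * w' x| := by
      calc _ ≤ |(-(Real.sin (1 * y) / y)) * pe α c (α-2) 1|
            + |(1/y) * ∫ x in Ioi (1:ℝ), Real.sin (x * y) * w' x| := abs_sub _ _
        _ = _ := by rw [abs_mul (1/y), abs_of_pos (by positivity : (0:ℝ) < 1/y)]
    refine htri.trans ?_
    have hwabs : |∫ x in Ioi (1:ℝ), Real.sin (x * y) * w' x|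
        ≤ 1 + Real.Gamma ((2*α-2)/α) := by
      rw [hintsplit]
      calc |(α-2) * (∫ x in Ioi (1:ℝ), Real.sin (x * y) * pe α c (α-3) x)
            - (c*α) * (∫ x in Ioi (1:ℝ), Real.sin (x * y) * pe α c (2*α-3) x)|
          ≤ |(α-2) * (∫ x in Ioi (1:ℝ), Real.sin (x * y) * pe α c (α-3) x)|
            + |(c*α) * (∫ x in Ioi (1:ℝ), Real.sin (x * y) * pe α c (2*α-3) x)| :=
            abs_sub _ _
        _ = |α-2| * |∫ x in Ioi (1:ℝ), Real.sin (x * y) * pe α c (α-3) x|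
            + (c*α) * |∫ x in Ioi (1:ℝ), Real.sin (x * y) * pe α c (2*α-3) x| := by
            rw [abs_mul, abs_mul, abs_of_nonneg (show (0:ℝ) ≤ c*α by positivity)]
        _ ≤ 1 + Real.Gamma ((2*α-2)/α) := add_le_add hT1 hT2
    have h1y : (1:ℝ)/y ≤ 1 := by rw [div_le_one hy0]; exact hy
    calc |(-(Real.sin (1 * y) / y)) * pe α c (α-2) 1|
          + (1/y) * |∫ x in Ioi (1:ℝ), Real.sin (x * y) * w' x|
        ≤ 1 + 1 * (1 + Real.Gamma ((2*α-2)/α)) := by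
          refine add_le_add hbd ?_
          apply mul_le_mul h1y hwabs (abs_nonneg _) zero_le_one
      _ = 2 + Real.Gamma ((2*α-2)/α) := by ring
  -- combine
  rw [hsplit]
  calc |(∫ x in Ioc (0:ℝ) 1, Real.cos (x * y) * pe α c (α-2) x)
        + ∫ x in Ioi (1:ℝ), Real.cos (x * y) * pe α c (α-2) x|
      ≤ |∫ x in Ioc (0:ℝ) 1, Real.cos (x * y) * pe α c (α-2) x|
        + |∫ x in Ioi (1:ℝ), Real.cos (x * y) * pe α c (α-2) x| := abs_add_le _ _
    _ ≤ 1/(α-1) + (2 + Real.Gamma ((2*α-2)/α)) := add_le_add hpart1 hpart2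
    _ = 1/(α-1) + 2 + Real.Gamma ((2*α-2)/α) := by ring

lemma key_bound {α : ℝ} (h1 : 1 < α) (h2 : α ≤ 2) :
    ∃ C : ℝ, 0 ≤ C ∧ ∀ s : ℝ, 0 < s → s ≤ 1 → ∀ y : ℝ, 1 ≤ y →
      |∫ x in Ioi (0:ℝ), Real.cos (x * y) * pe α (s/2) 0 x| ≤ C * s / y^2 := by
  have hα1 : (1:ℝ) ≤ α := h1.le
  have hα0 : (0:ℝ) < α := by linarith
  set CA : ℝ := 1/(α-1) + 2 + Real.Gamma ((2*α-2)/α) with hCAdef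
  set CB : ℝ := (2*α-2) * (1/α) * Real.Gamma ((2*α-2)/α) + Real.Gamma ((3*α-2)/α)
    with hCBdef
  have hGA : 0 < Real.Gamma ((2*α-2)/α) := Real.Gamma_pos_of_pos (div_pos (by linarith) hα0)
  have hGB : 0 < Real.Gamma ((3*α-2)/α) := Real.Gamma_pos_of_pos (div_pos (by linarith) hα0)
  have hCA : 0 ≤ CA := by
    have : 0 < 1/(α-1) := one_div_pos.mpr (by linarith)
    rw [hCAdef]; linarith
  have hCB : 0 ≤ CB := by
    have h3 : 0 ≤ (2*α-2) * (1/α) :=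
      mul_nonneg (by linarith) (le_of_lt (one_div_pos.mpr hα0))
    rw [hCBdef]; nlinarith
  have hCsum : 0 ≤ (α-1) * CA + α * CB :=
    add_nonneg (mul_nonneg (by linarith) hCA) (mul_nonneg hα0.le hCB)
  refine ⟨α * ((α-1) * CA + α * CB) / 2,
    div_nonneg (mul_nonneg hα0.le hCsum) (by norm_num), ?_⟩
  intro s hs hs1 y hy
  have hy0 : (0:ℝ) < y := lt_of_lt_of_le one_pos hy
  set c : ℝ := s/2 with hcdef
  have hc : 0 < c := by rw [hcdef]; positivity
  have hc1 : c ≤ 1 := by rw [hcdef]; linarith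
  -- first integration by parts
  have hw1 : ∀ x ∈ Ioi (0:ℝ), HasDerivAt (fun t => pe α c 0 t)
      (-((c*α) * pe α c (α-1) x)) x := by
    intro x hx
    have h := hasDerivAt_pe α c 0 hx
    simpa [show (0:ℝ)+α-1 = α-1 by ring] using h
  have hwc1 : ContinuousWithinAt (fun t => pe α c 0 t) (Ici (0:ℝ)) 0 :=
    (contAt_pe (Or.inr ⟨le_refl 0, hα0.le⟩)).continuousWithinAt
  have hw01 : Tendsto (fun t => pe α c 0 t) atTop (nhds 0) := tendsto_pe h1 hc
  have hint11 : IntegrableOn (fun x => Real.cos (x * y) * pe α c 0 x) (Ioi 0) :=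
    int_trig_pe hα1 (by norm_num) hc (cont_cos_mul y) (fun x => abs_cos_le_one' _)
  have hintA : IntegrableOn (fun x => Real.sin (x * y) * pe α c (α-1) x) (Ioi 0) :=
    int_trig_pe hα1 (by linarith) hc (cont_sin_mul y) (fun x => abs_sin_le_one' _)
  have hfeq1 : (fun x => Real.sin (x * y) * (-((c*α) * pe α c (α-1) x)))
      = fun x => (-(c*α)) * (Real.sin (x * y) * pe α c (α-1) x) := by
    funext x; ring
  have hint12 : IntegrableOn
      (fun x => Real.sin (x * y) * (-((c*α) * pe α c (α-1) x))) (Ioi 0) := by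
    rw [hfeq1]; exact hintA.const_mul _
  have key1 := ibp_cos hy0 hw1 hwc1 hw01 hint11 hint12
  have hpe00 : pe α c 0 0 = 1 := by simp [pe, Real.rpow_zero, Real.zero_rpow (ne_of_gt hα0)]
  rw [hpe00, hfeq1, integral_const_mul] at key1
  simp only [zero_mul, Real.sin_zero, zero_div, neg_zero, zero_mul, mul_one, zero_sub] at key1
  -- second integration by parts
  have hw2 : ∀ x ∈ Ioi (0:ℝ), HasDerivAt (fun t => pe α c (α-1) t)
      ((α-1) * pe α c (α-2) x - (c*α) * pe α c (2*α-2) x) x := by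
    intro x hx
    have h := hasDerivAt_pe α c (α-1) hx
    simpa [show α-1-1 = α-2 by ring, show α-1+α-1 = 2*α-2 by ring] using h
  have hwc2 : ContinuousWithinAt (fun t => pe α c (α-1) t) (Ici (0:ℝ)) 0 :=
    (contAt_pe (Or.inr ⟨by linarith, hα0.le⟩)).continuousWithinAt
  have hw02 : Tendsto (fun t => pe α c (α-1) t) atTop (nhds 0) := tendsto_pe h1 hc
  have hintB : IntegrableOn (fun x => Real.cos (x * y) * pe α c (α-2) x) (Ioi 0) :=
    int_trig_pe hα1 (by linarith) hc (cont_cos_mul y) (fun x => abs_cos_le_one' _)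
  have hintC : IntegrableOn (fun x => Real.cos (x * y) * pe α c (2*α-2) x) (Ioi 0) :=
    int_trig_pe hα1 (by linarith) hc (cont_cos_mul y) (fun x => abs_cos_le_one' _)
  have hfeq2 : (fun x => Real.cos (x * y)
        * ((α-1) * pe α c (α-2) x - (c*α) * pe α c (2*α-2) x))
      = fun x => (α-1) * (Real.cos (x * y) * pe α c (α-2) x)
          - (c*α) * (Real.cos (x * y) * pe α c (2*α-2) x) := by
    funext x; ring
  have hint22 : IntegrableOn (fun x => Real.cos (x * y)
      * ((α-1) * pe α c (α-2) x - (c*α) * pe α c (2*α-2) x)) (Ioi 0) := by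
    rw [hfeq2]; exact (hintB.const_mul _).sub (hintC.const_mul _)
  have key2 := ibp_sin hy0 hw2 hwc2 hw02 hintA hint22
  have hpe10 : pe α c (α-1) 0 = 0 := by
    simp [pe, Real.zero_rpow (show α-1 ≠ 0 by intro h; linarith [h])]
  rw [hpe10, hfeq2, integral_sub (hintB.const_mul _) (hintC.const_mul _),
    integral_const_mul, integral_const_mul] at key2
  simp only [mul_zero, zero_add] at key2
  -- combine
  have hA := partA h1 h2 hc hc1 hy
  have hB := partB h1 hc hy
  have hD : |(α-1) * (∫ x in Ioi (0:ℝ), Real.cos (x * y) * pe α c (α-2) x)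
        - (c*α) * (∫ x in Ioi (0:ℝ), Real.cos (x * y) * pe α c (2*α-2) x)|
      ≤ (α-1) * CA + α * CB := by
    have tri : |(α-1) * (∫ x in Ioi (0:ℝ), Real.cos (x * y) * pe α c (α-2) x)
          - (c*α) * (∫ x in Ioi (0:ℝ), Real.cos (x * y) * pe α c (2*α-2) x)|
        ≤ (α-1) * |∫ x in Ioi (0:ℝ), Real.cos (x * y) * pe α c (α-2) x|
          + (c*α) * |∫ x in Ioi (0:ℝ), Real.cos (x * y) * pe α c (2*α-2) x| := by
      calc _ ≤ |(α-1) * (∫ x in Ioi (0:ℝ), Real.cos (x * y) * pe α c (α-2) x)|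
            + |(c*α) * (∫ x in Ioi (0:ℝ), Real.cos (x * y) * pe α c (2*α-2) x)| :=
          abs_sub _ _
        _ = _ := by
          rw [abs_mul, abs_mul, abs_of_nonneg (show (0:ℝ) ≤ α-1 by linarith),
            abs_of_nonneg (show (0:ℝ) ≤ c*α by positivity)]
    refine tri.trans ?_
    have step1 : (α-1) * |∫ x in Ioi (0:ℝ), Real.cos (x * y) * pe α c (α-2) x|
        ≤ (α-1) * CA := mul_le_mul_of_nonneg_left hA (by linarith)
    have step2 : (c*α) * |∫ x in Ioi (0:ℝ), Real.cos (x * y) * pe α c (2*α-2) x|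
        ≤ α * CB := by
      calc (c*α) * |∫ x in Ioi (0:ℝ), Real.cos (x * y) * pe α c (2*α-2) x|
          ≤ (c*α) * (CB * c ^ (-(2*α-2)/α)) :=
            mul_le_mul_of_nonneg_left hB (by positivity)
        _ = α * CB * (c * c ^ (-(2*α-2)/α)) := by ring
        _ = α * CB * c ^ ((2-α)/α) := by
            nth_rewrite 1 [← Real.rpow_one c]
            rw [← Real.rpow_add hc]
            congr 2
            field_simp
            ring
        _ ≤ α * CB * 1 := by
            apply mul_le_mul_of_nonneg_left _ (by positivity)
            exact Real.rpow_le_one hc.le hc1 (div_nonneg (by linarith) hα0.le)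
        _ = α * CB := mul_one _
    linarith [step1, step2]
  rw [key1, key2]
  have heq2 : (-(1/y * (-(c*α) * (1/y
        * ((α-1) * (∫ x in Ioi (0:ℝ), Real.cos (x * y) * pe α c (α-2) x)
          - (c*α) * (∫ x in Ioi (0:ℝ), Real.cos (x * y) * pe α c (2*α-2) x))))))
      = (c*α/y^2) * ((α-1) * (∫ x in Ioi (0:ℝ), Real.cos (x * y) * pe α c (α-2) x)
          - (c*α) * (∫ x in Ioi (0:ℝ), Real.cos (x * y) * pe α c (2*α-2) x)) := by
    ring
  rw [heq2, abs_mul, abs_of_nonneg (show (0:ℝ) ≤ c*α/y^2 by positivity)]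
  calc c*α/y^2 * |(α-1) * (∫ x in Ioi (0:ℝ), Real.cos (x * y) * pe α c (α-2) x)
        - (c*α) * (∫ x in Ioi (0:ℝ), Real.cos (x * y) * pe α c (2*α-2) x)|
      ≤ c*α/y^2 * ((α-1) * CA + α * CB) :=
        mul_le_mul_of_nonneg_left hD (by positivity)
    _ = α * ((α-1) * CA + α * CB) / 2 * s / y^2 := by
        rw [hcdef]
        ring

lemma kernel_abs {α : ℝ} (h1 : 1 < α) (h2 : α ≤ 2) :
    ∃ C : ℝ, 0 ≤ C ∧ ∀ s : ℝ, 0 < s → s ≤ 1 → ∀ y : ℝ, 1 ≤ y →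
      |stableKernel α s y| ≤ C * s / y^2 := by
  obtain ⟨C, hC0, hC⟩ := key_bound h1 h2
  refine ⟨C, hC0, ?_⟩
  intro s hs hs1 y hy
  have hy0 : (0:ℝ) < y := lt_of_lt_of_le one_pos hy
  have hfull : (∫ ξ : ℝ, Real.cos (ξ * y) * Real.exp (-(s * |ξ| ^ α) / 2))
      = 2 * ∫ x in Ioi (0:ℝ), Real.cos (x * y) * pe α (s/2) 0 x := by
    rw [← integral_comp_abs (f := fun t => Real.cos (t * y) * pe α (s/2) 0 t)]
    refine integral_congr_ae (ae_of_all _ fun ξ => ?_)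
    simp only [pe, Real.rpow_zero, one_mul]
    rw [show |ξ| * y = |ξ * y| by rw [abs_mul, abs_of_nonneg hy0.le], Real.cos_abs]
    congr 1
    ring
  have hCs : 0 ≤ C * s / y^2 := by positivity
  rw [stableKernel, hfull]
  rw [show (2 * Real.pi)⁻¹ * (2 * ∫ x in Ioi (0:ℝ), Real.cos (x * y) * pe α (s/2) 0 x)
      = Real.pi⁻¹ * ∫ x in Ioi (0:ℝ), Real.cos (x * y) * pe α (s/2) 0 x from by
    rw [mul_inv, mul_comm (2:ℝ)⁻¹, mul_assoc, ← mul_assoc (2:ℝ)⁻¹, inv_mul_cancel₀ (two_ne_zero), one_mul]]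
  rw [abs_mul, abs_of_nonneg (inv_nonneg.mpr Real.pi_pos.le)]
  calc Real.pi⁻¹ * |∫ x in Ioi (0:ℝ), Real.cos (x * y) * pe α (s/2) 0 x|
      ≤ 1 * (C * s / y^2) := by
        apply mul_le_mul _ (hC s hs hs1 y hy) (abs_nonneg _) zero_le_one
        rw [inv_le_one_iff₀]
        right
        linarith [Real.pi_gt_three]
    _ = C * s / y^2 := one_mul _

/-- There is a finite constant `C` (depending only on `α`) such that for all
`ε ∈ (0,1)`: `∫₀^ε ∫₁^∞ p_s(y)² dy ds ≤ C ε³`; in particular this quantity is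
at most `C ε^{2(α−1)/α}` uniformly for `ε ∈ (0,1)`. -/
theorem stmt_9 (α : ℝ) (hα : α ∈ Set.Ioc (1 : ℝ) 2) :
    ∃ C : ℝ, ∀ ε ∈ Set.Ioo (0 : ℝ) 1,
      (∫ s in Set.Ioc (0 : ℝ) ε, ∫ y in Set.Ioi (1 : ℝ),
          (stableKernel α s y) ^ 2) ≤ C * ε ^ (3 : ℕ) ∧
      (∫ s in Set.Ioc (0 : ℝ) ε, ∫ y in Set.Ioi (1 : ℝ),
          (stableKernel α s y) ^ 2) ≤ C * ε ^ (2 * (α - 1) / α) := by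
  obtain ⟨C₀, hC00, hK⟩ := kernel_abs hα.1 hα.2
  have hα0 : (0:ℝ) < α := lt_trans one_pos hα.1
  refine ⟨C₀^2/9, ?_⟩
  intro ε hε
  obtain ⟨hε0, hε1⟩ := hε
  have hCf : (0:ℝ) ≤ C₀^2/9 := by positivity
  -- inner bound
  have hinner : ∀ s : ℝ, s ∈ Ioc (0:ℝ) ε →
      (∫ y in Ioi (1:ℝ), (stableKernel α s y) ^ 2) ≤ C₀^2/3 * s^2 := by
    intro s hsmem
    have hs0 : 0 < s := hsmem.1
    have hs1 : s ≤ 1 := le_of_lt (lt_of_le_of_lt hsmem.2 hε1)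
    have hg : IntegrableOn (fun y : ℝ => C₀^2 * s^2 * y ^ (-4:ℝ)) (Ioi 1) :=
      (integrableOn_Ioi_rpow_of_lt (by norm_num) one_pos).const_mul _
    have hgv : (∫ y in Ioi (1:ℝ), C₀^2 * s^2 * y ^ (-4:ℝ)) = C₀^2/3 * s^2 := by
      rw [integral_const_mul, integral_Ioi_rpow_of_lt (by norm_num) one_pos]
      rw [Real.one_rpow]
      norm_num
      ring
    rw [← hgv]
    refine integral_mono_of_nonneg (ae_of_all _ fun y => sq_nonneg _) hg ?_
    filter_upwards [ae_restrict_mem measurableSet_Ioi] with y hymem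
    have hy1 : (1:ℝ) ≤ y := le_of_lt hymem
    have hy0 : (0:ℝ) < y := lt_of_lt_of_le one_pos hy1
    have hker := hK s hs0 hs1 y hy1
    have hsq : (stableKernel α s y)^2 ≤ (C₀ * s / y^2)^2 := by
      rw [← sq_abs]
      exact pow_le_pow_left₀ (abs_nonneg _) hker 2
    refine hsq.trans (le_of_eq ?_)
    rw [show y ^ (-4:ℝ) = (y^(4:ℕ))⁻¹ from by
      rw [← Real.rpow_natCast y 4, ← Real.rpow_neg hy0.le]; norm_num]
    field_simp
  -- outer bound
  have houter : (∫ s in Ioc (0:ℝ) ε, ∫ y in Ioi (1:ℝ), (stableKernel α s y) ^ 2)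
      ≤ C₀^2/9 * ε ^ (3:ℕ) := by
    have hg : IntegrableOn (fun s : ℝ => C₀^2/3 * s^2) (Ioc 0 ε) :=
      (continuous_const.mul (continuous_pow 2)).integrableOn_Ioc
    have hgv : (∫ s in Ioc (0:ℝ) ε, C₀^2/3 * s^2) = C₀^2/9 * ε ^ (3:ℕ) := by
      rw [integral_const_mul, ← intervalIntegral.integral_of_le hε0.le,
        integral_pow]
      norm_num
      ring
    rw [← hgv]
    refine integral_mono_of_nonneg
      (ae_of_all _ fun s => integral_nonneg fun y => sq_nonneg _) hg ?_
    filter_upwards [ae_restrict_mem measurableSet_Ioc] with s hsmem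
    exact hinner s hsmem
  refine ⟨houter, houter.trans ?_⟩
  have hexp : 2 * (α - 1) / α ≤ ((3:ℕ):ℝ) := by
    rw [div_le_iff₀ hα0]
    push_cast
    nlinarith [hα.2]
  have hmono : ε ^ (3:ℕ) ≤ ε ^ (2 * (α - 1) / α) := by
    rw [← Real.rpow_natCast ε 3]
    exact Real.rpow_le_rpow_of_exponent_ge hε0 hε1.le hexp
  exact mul_le_mul_of_nonneg_left hmono hCf
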